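/- Let B₂ be a group, A₂ a normal subgroup of B₂ contained in the center Z(B₂), B₁ a finite-index subgroup of B₂, and A₁ := B₁ ∩ A₂; assume A₁ has finite index in A₂. Let φ : B₁ → B₂ be a homomorphism with φ(A₁) ⊆ A₂; let φ' : A₁ → A₂ be its restriction and φ̄ : B₁A₂/A₂ → B₂/A₂ the induced homomorphism (b·A₂ ↦ φ(b)·A₂). Then R(φ) ≤ R(φ̄)·R(φ'), where the product is ∞ if either factor is ∞. -/

import Mathlib

/-- The Reidemeister number (in `ℕ∞`) of the generalized twisted conjugacy relation on `G`
determined by a "subgroup inclusion" `ι : H →* G` and a homomorphism `φ : H →* G`: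
`a ∼ b ↔ ∃ γ ∈ H, a = ι(γ)·b·φ(γ)⁻¹`. -/
private lemma twisted_equiv {H G : Type*} [Group H] [Group G] (ι φ : H →* G) :
    Equivalence (fun a b : G => ∃ γ : H, a = ι γ * b * (φ γ)⁻¹) := by
  constructor
  · intro a; exact ⟨1, by simp⟩
  · rintro a b ⟨γ, rfl⟩; exact ⟨γ⁻¹, by simp [mul_assoc]⟩
  · rintro a b c ⟨γ, rfl⟩ ⟨δ, rfl⟩; exact ⟨γ * δ, by simp [mul_assoc]⟩

private lemma quot_rel {G : Type*} (r : G → G → Prop) (h : Equivalence r) (a b : G)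
    (heq : Quot.mk r a = Quot.mk r b) : r a b :=
  (h.eqvGen_iff).mp (Quot.eq.mp heq)


noncomputable def reidemeisterNumber {H G : Type*} [Group H] [Group G]
    (ι : H →* G) (φ : H →* G) : ℕ∞ :=
  ENat.card (Quot (fun a b : G => ∃ γ : H, a = ι γ * b * (φ γ)⁻¹))

/-- part (3) of Lemma 4.6 of the paper.
`A₂ ⊴ B₂` with `A₂ ≤ Z(B₂)`, `B₁ ≤_f B₂`, `A₁ = B₁ ∩ A₂ ≤_f A₂`; `φ : B₁ → B₂` satisfies
`φ(A₁) ⊆ A₂`, with restriction `φ' : A₁ → A₂` and induced homomorphism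
`φ̄ : B₁A₂/A₂ → B₂/A₂`.  Then `R(φ) ≤ R(φ̄)·R(φ')` (in `ℕ∞`, where the product is `∞`
whenever a factor is `∞`). -/
theorem reidemeister_le_mul_of_central
    {B₂ : Type*} [Group B₂] (A₂ : Subgroup B₂) [A₂.Normal]
    (hA₂central : A₂ ≤ Subgroup.center B₂)
    (B₁ : Subgroup B₂) [B₁.FiniteIndex]
    (hA₁fi : ((B₁ ⊓ A₂).subgroupOf A₂).FiniteIndex)
    (φ : B₁ →* B₂)
    (hφA : ∀ b : B₁, (b : B₂) ∈ A₂ → φ b ∈ A₂)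
    (φ' : ↥((B₁ ⊓ A₂).subgroupOf A₂) →* A₂)
    (hφ' : ∀ (a : A₂) (h : (a : B₂) ∈ B₁),
      ((φ' ⟨a, Subgroup.mem_subgroupOf.mpr (Subgroup.mem_inf.mpr ⟨h, a.2⟩)⟩ : A₂) : B₂)
        = φ ⟨(a : B₂), h⟩)
    (φbar : ↥(B₁.map (QuotientGroup.mk' A₂)) →* B₂ ⧸ A₂)
    (hφbar : ∀ b : B₁,
      φbar ⟨QuotientGroup.mk' A₂ (b : B₂), Subgroup.mem_map.mpr ⟨(b : B₂), b.2, rfl⟩⟩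
        = QuotientGroup.mk' A₂ (φ b)) :
    reidemeisterNumber B₁.subtype φ ≤
      reidemeisterNumber (B₁.map (QuotientGroup.mk' A₂)).subtype φbar *
        reidemeisterNumber ((B₁ ⊓ A₂).subgroupOf A₂).subtype φ' := by
  set R : B₂ → B₂ → Prop :=
    fun a b => ∃ γ : B₁, a = B₁.subtype γ * b * (φ γ)⁻¹ with hRdef
  set Rbar : (B₂ ⧸ A₂) → (B₂ ⧸ A₂) → Prop :=
    fun a b => ∃ γ : ↥(B₁.map (QuotientGroup.mk' A₂)),
      a = (B₁.map (QuotientGroup.mk' A₂)).subtype γ * b * (φbar γ)⁻¹ with hRbardef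
  set R' : A₂ → A₂ → Prop :=
    fun a b => ∃ γ : ↥((B₁ ⊓ A₂).subgroupOf A₂),
      a = ((B₁ ⊓ A₂).subgroupOf A₂).subtype γ * b * (φ' γ)⁻¹ with hR'def
  have hReq : Equivalence R := twisted_equiv _ _
  have hRbareq : Equivalence Rbar := twisted_equiv _ _
  have hR'eq : Equivalence R' := twisted_equiv _ _
  -- the surjection
  set f : Quot Rbar × Quot R' → Quot R :=
    fun p => Quot.mk R (Quotient.out (Quot.out p.1 : B₂ ⧸ A₂) * ((Quot.out p.2 : A₂) : B₂)) with hfdef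
  have hf : Function.Surjective f := by
    intro x
    obtain ⟨a, rfl⟩ := Quot.exists_rep x
    set q : Quot Rbar := Quot.mk Rbar (QuotientGroup.mk' A₂ a) with hq
    set bq : B₂ ⧸ A₂ := Quot.out q with hbq
    set b : B₂ := Quotient.out bq with hbdef
    have hb : QuotientGroup.mk' A₂ b = bq := QuotientGroup.out_eq' bq
    have hrel : Rbar (QuotientGroup.mk' A₂ a) bq := by
      refine quot_rel Rbar hRbareq _ _ ?_
      rw [hbq, Quot.out_eq]
    obtain ⟨g, hg⟩ := hrel
    obtain ⟨γ, hγB₁, hγ⟩ := Subgroup.mem_map.mp g.2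
    set γ' : B₁ := ⟨γ, hγB₁⟩ with hγ'def
    have hgeq : g = ⟨QuotientGroup.mk' A₂ (γ' : B₂),
        Subgroup.mem_map.mpr ⟨(γ' : B₂), γ'.2, rfl⟩⟩ := Subtype.ext hγ.symm
    have hφg : φbar g = QuotientGroup.mk' A₂ (φ γ') := by rw [hgeq]; exact hφbar γ'
    -- hg : mk a = ↑g * bq * (φbar g)⁻¹
    have hgcoe : ((B₁.map (QuotientGroup.mk' A₂)).subtype g : B₂ ⧸ A₂)
        = QuotientGroup.mk' A₂ γ := by
      simpa using hγ.symm
    have hmk : QuotientGroup.mk' A₂ a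
        = QuotientGroup.mk' A₂ (γ * b * (φ γ')⁻¹) := by
      rw [hg, hgcoe, hφg, ← hb]
      simp [map_mul]
    have hc₀ : (γ * b * (φ γ')⁻¹)⁻¹ * a ∈ A₂ := (QuotientGroup.eq).mp hmk.symm
    set c₀ : B₂ := (γ * b * (φ γ')⁻¹)⁻¹ * a with hc₀def
    have ha : a = γ * b * (φ γ')⁻¹ * c₀ := by rw [hc₀def, mul_inv_cancel_left]
    have hcomm₀ : ∀ g : B₂, g * c₀ = c₀ * g :=
      fun g => Subgroup.mem_center_iff.mp (hA₂central hc₀) g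
    have h1 : R a (b * c₀) := by
      refine ⟨γ', ?_⟩
      show a = γ * (b * c₀) * (φ γ')⁻¹
      rw [ha]
      simp only [mul_assoc]
      rw [hcomm₀]
    set r : Quot R' := Quot.mk R' (⟨c₀, hc₀⟩ : A₂) with hr
    set c₁ : A₂ := Quot.out r with hc₁def
    have hrel' : R' c₁ ⟨c₀, hc₀⟩ := by
      refine quot_rel R' hR'eq _ _ ?_
      rw [hc₁def, Quot.out_eq]
    obtain ⟨η, hη⟩ := hrel'
    have hηB₁ : ((η : A₂) : B₂) ∈ B₁ :=
      (Subgroup.mem_inf.mp (Subgroup.mem_subgroupOf.mp η.2)).1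
    set η' : B₁ := ⟨((η : A₂) : B₂), hηB₁⟩ with hη'def
    have hφ'η : ((φ' η : A₂) : B₂) = φ η' := by
      have h := hφ' (η : A₂) hηB₁
      rwa [show (⟨(η : A₂), Subgroup.mem_subgroupOf.mpr
        (Subgroup.mem_inf.mpr ⟨hηB₁, (η : A₂).2⟩)⟩ : ↥((B₁ ⊓ A₂).subgroupOf A₂)) = η
        from Subtype.ext rfl] at h
    have hηcoe : (c₁ : B₂) = ((η : A₂) : B₂) * c₀ * ((φ' η : A₂) : B₂)⁻¹ := by
      rw [hη]; push_cast; rfl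
    have hcommη : ∀ g : B₂, g * ((η : A₂) : B₂) = ((η : A₂) : B₂) * g :=
      fun g => Subgroup.mem_center_iff.mp (hA₂central (η : A₂).2) g
    have h2 : R (b * (c₁ : B₂)) (b * c₀) := by
      refine ⟨η', ?_⟩
      show b * (c₁ : B₂) = ((η : A₂) : B₂) * (b * c₀) * (φ η')⁻¹
      rw [hηcoe, hφ'η]
      simp only [mul_assoc]
      rw [← mul_assoc b, hcommη b]
      simp only [mul_assoc]
    refine ⟨(q, r), ?_⟩
    show Quot.mk R (b * (c₁ : B₂)) = Quot.mk R a
    rw [Quot.sound h2, Quot.sound h1]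
  calc reidemeisterNumber B₁.subtype φ
      = ENat.card (Quot R) := rfl
    _ ≤ ENat.card (Quot Rbar × Quot R') :=
        OrderHomClass.mono Cardinal.toENat (Cardinal.mk_le_of_surjective hf)
    _ = ENat.card (Quot Rbar) * ENat.card (Quot R') := by
        simp [ENat.card, Cardinal.mk_prod, map_mul]
    _ = _ := rfl
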